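/- Let $\gamma \in (0,1)$, $\lambda \in (0,1)$, $d \geq 1$, $H > 1$. Suppose $g : \mathbb{R}^d \to \mathbb{R}$ is a bounded, nonnegative, continuous function with $g(x) \leq H$ and $|g(x) - g(y)| \leq H|x - y|^{\gamma}$ for all $x, y$. Suppose further that over an annulus $A = \{x : R + ar < |x| < R + br\}$ (with $0 \leq a < b$, $R > 1$, $r > 0$) we have $\int_A g(x)\,dx = 1$ and $\sup_{x \in A} g(x) \geq 1$. Then $\int_A (g(x))^{\lambda}\,dx \geq N(\lambda, d) \left( (4H)^{-1/\gamma} \wedge (b-a)r \right)^d$ for some constant $N(\lambda, d) > 0$. -/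

import Mathlib

open MeasureTheory

set_option maxHeartbeats 1000000

theorem stmt6 (lam : ℝ) (hlam : lam ∈ Set.Ioo (0:ℝ) 1) (d : ℕ) (hd : 1 ≤ d) :
    ∃ N : ℝ, 0 < N ∧
      ∀ (γ H R a b r : ℝ) (g : EuclideanSpace ℝ (Fin d) → ℝ),
        γ ∈ Set.Ioo (0:ℝ) 1 → 1 < H → 1 < R → 0 ≤ a → a < b → 0 < r →
        Continuous g → (∀ x, 0 ≤ g x) → (∀ x, g x ≤ H) →
        (∀ x y, |g x - g y| ≤ H * ‖x - y‖ ^ γ) →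
        (∫ x in {x : EuclideanSpace ℝ (Fin d) | R + a*r < ‖x‖ ∧ ‖x‖ < R + b*r}, g x) = 1 →
        1 ≤ sSup (g '' {x : EuclideanSpace ℝ (Fin d) | R + a*r < ‖x‖ ∧ ‖x‖ < R + b*r}) →
        N * (min ((4*H) ^ (-(1/γ))) ((b-a)*r)) ^ d ≤
          ∫ x in {x : EuclideanSpace ℝ (Fin d) | R + a*r < ‖x‖ ∧ ‖x‖ < R + b*r},
            (g x) ^ lam := by
  have hlam0 : 0 < lam := hlam.1
  haveI : Nonempty (Fin d) := ⟨⟨0, hd⟩⟩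
  set c := (volume (Metric.ball (0:EuclideanSpace ℝ (Fin d)) 1)).toReal with hc
  have hcpos : 0 < c :=
    ENNReal.toReal_pos (Metric.measure_ball_pos volume _ one_pos).ne' measure_ball_lt_top.ne
  refine ⟨(1/4:ℝ)^lam * c / 8^d, by positivity, ?_⟩
  intro γ H R a b r g hγ hH hR ha hab hr hg hg0 hgH hHol hint hsup
  set A := {x : EuclideanSpace ℝ (Fin d) | R + a*r < ‖x‖ ∧ ‖x‖ < R + b*r} with hA
  set ρ := (4*H) ^ (-(1/γ)) with hρ
  have h4H : (1:ℝ) < 4*H := by linarith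
  have hρpos : 0 < ρ := Real.rpow_pos_of_pos (by linarith) _
  have hρlt1 : ρ < 1 := by
    apply Real.rpow_lt_one_of_one_lt_of_neg h4H
    have h0 : 0 < 1/γ := one_div_pos.mpr hγ.1
    linarith
  set δ := min ρ ((b-a)*r) with hδ
  have hbar : 0 < (b-a)*r := by nlinarith
  have hδpos : 0 < δ := lt_min hρpos hbar
  have hδρ : δ ≤ ρ := min_le_left _ _
  have hδbr : δ ≤ (b-a)*r := min_le_right _ _
  have hδ1 : δ < 1 := lt_of_le_of_lt hδρ hρlt1
  -- the annulus is nonempty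
  have hAne : A.Nonempty := by
    refine ⟨EuclideanSpace.single (⟨0, hd⟩ : Fin d) (R + ((a+b)/2)*r), ?_, ?_⟩ <;>
      rw [EuclideanSpace.norm_single, Real.norm_eq_abs, abs_of_nonneg (by nlinarith)] <;> nlinarith
  -- find a point where g exceeds 1/2
  obtain ⟨v, hv, hv2⟩ : ∃ v ∈ g '' A, (1:ℝ)/2 < v :=
    exists_lt_of_lt_csSup (hAne.image g) (by linarith)
  obtain ⟨x₀, hx₀A, rfl⟩ := hv
  -- g ≥ 1/4 near x₀
  have hnear : ∀ z : EuclideanSpace ℝ (Fin d), ‖z - x₀‖ ≤ ρ → (1:ℝ)/4 ≤ g z := by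
    intro z hz
    have h1 : |g x₀ - g z| ≤ H * ‖x₀ - z‖ ^ γ := hHol x₀ z
    have hns : ‖x₀ - z‖ = ‖z - x₀‖ := norm_sub_rev _ _
    have h2 : ‖z - x₀‖ ^ γ ≤ ρ ^ γ := Real.rpow_le_rpow (norm_nonneg _) hz hγ.1.le
    have h3 : ρ ^ γ = (4*H)⁻¹ := by
      have hγne : γ ≠ 0 := ne_of_gt hγ.1
      rw [hρ, ← Real.rpow_mul (by linarith : (0:ℝ) ≤ 4*H),
        show -(1/γ)*γ = -1 by field_simp, Real.rpow_neg_one]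
    have h4 : H * ρ ^ γ = 1/4 := by
      rw [h3]; field_simp
    have h5 : |g x₀ - g z| ≤ 1/4 := by
      calc |g x₀ - g z| ≤ H * ‖x₀ - z‖ ^ γ := h1
        _ ≤ H * ρ ^ γ := by
            rw [hns]; exact mul_le_mul_of_nonneg_left h2 (by linarith)
        _ = 1/4 := h4
    have := abs_le.mp h5
    linarith [this.2]
  -- geometry: find a ball inside A ∩ B(x₀, ρ)
  have hx1 : R + a*r < ‖x₀‖ := hx₀A.1
  have hx2 : ‖x₀‖ < R + b*r := hx₀A.2
  set t := ‖x₀‖ with ht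
  have htpos : (0:ℝ) < t := by nlinarith
  obtain ⟨u, hu1, hu2, hu3⟩ : ∃ u : ℝ, R + a*r < u - δ/8 ∧ u + δ/8 < R + b*r ∧ |u - t| ≤ δ/4 := by
    rcases le_or_gt (t + δ/2) (R + b*r) with h | h
    · refine ⟨t + δ/4, by linarith, by linarith, ?_⟩
      rw [show t + δ/4 - t = δ/4 by ring, abs_of_nonneg (by linarith)]
    · refine ⟨t - δ/4, by linarith, by linarith, ?_⟩
      rw [show t - δ/4 - t = -(δ/4) by ring, abs_neg, abs_of_nonneg (by linarith)]
  have hupos : 0 < u := by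
    have := abs_le.mp hu3
    nlinarith [this.1]
  set y := (u/t) • x₀ with hy
  have hyn : ‖y‖ = u := by
    rw [hy, norm_smul, Real.norm_eq_abs, abs_of_nonneg (by positivity), ← ht]
    field_simp
  have hyx₀ : ‖y - x₀‖ = |u - t| := by
    have htne : t ≠ 0 := ne_of_gt htpos
    have : y - x₀ = ((u - t)/t) • x₀ := by
      rw [hy, show (u - t)/t = u/t - 1 from by field_simp, sub_smul, one_smul]
    rw [this, norm_smul, Real.norm_eq_abs, ← ht, abs_div, abs_of_nonneg htpos.le]
    field_simp
  set B := Metric.ball y (δ/8) with hB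
  have hBA : B ⊆ A := by
    intro z hz
    have hzy : ‖z - y‖ < δ/8 := by
      rw [← dist_eq_norm]; exact hz
    have habs : |‖z‖ - ‖y‖| ≤ ‖z - y‖ := abs_norm_sub_norm_le _ _
    have := abs_le.mp habs
    constructor
    · rw [hyn] at this; linarith [this.1]
    · rw [hyn] at this; linarith [this.2]
  have hB14 : ∀ z ∈ B, (1:ℝ)/4 ≤ g z := by
    intro z hz
    apply hnear
    have hzy : ‖z - y‖ < δ/8 := by rw [← dist_eq_norm]; exact hz
    calc ‖z - x₀‖ ≤ ‖z - y‖ + ‖y - x₀‖ := norm_sub_le_norm_sub_add_norm_sub _ _ _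
      _ ≤ δ/8 + δ/4 := by rw [hyx₀]; linarith
      _ ≤ ρ := by linarith
  -- measure of B
  have hBvol : (volume B).toReal = (δ/8)^d * c := by
    rw [hB, Measure.addHaar_ball volume y (by positivity : (0:ℝ) ≤ δ/8),
      finrank_euclideanSpace_fin, ENNReal.toReal_mul, ENNReal.toReal_ofReal (by positivity)]
  -- integrability
  have hAmeas : MeasurableSet A := by
    have : A = {x : EuclideanSpace ℝ (Fin d) | R + a*r < ‖x‖} ∩ {x | ‖x‖ < R + b*r} := rfl
    rw [this]
    exact (measurableSet_lt measurable_const measurable_norm).inter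
      (measurableSet_lt measurable_norm measurable_const)
  have hAfin : volume A ≠ ⊤ := by
    refine ne_of_lt (lt_of_le_of_lt (measure_mono ?_) (measure_ball_lt_top
      (x := (0:EuclideanSpace ℝ (Fin d))) (r := R + b*r)))
    intro x hx
    simpa [Metric.mem_ball] using hx.2
  have hcont : Continuous (fun x : EuclideanSpace ℝ (Fin d) => g x ^ lam) :=
    hg.rpow_const (fun x => Or.inr hlam0.le)
  have hInt : IntegrableOn (fun x => g x ^ lam) A := by
    apply Measure.integrableOn_of_bounded (M := H) hAfin hcont.aestronglyMeasurable
    filter_upwards with x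
    rw [Real.norm_eq_abs, abs_of_nonneg (Real.rpow_nonneg (hg0 x) _)]
    calc g x ^ lam ≤ H ^ lam := Real.rpow_le_rpow (hg0 x) (hgH x) hlam0.le
      _ ≤ H ^ (1:ℝ) := Real.rpow_le_rpow_of_exponent_le hH.le hlam.2.le
      _ = H := Real.rpow_one H
  -- main chain
  have key : (1/4:ℝ)^lam * c / 8^d * δ^d ≤ ∫ x in A, g x ^ lam := by
    calc (1/4:ℝ)^lam * c / 8^d * δ^d = (1/4:ℝ)^lam * ((δ/8)^d * c) := by
          rw [div_pow]; ring
      _ = ∫ _ in B, (1/4:ℝ)^lam := by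
          rw [setIntegral_const, smul_eq_mul, measureReal_def, hBvol]; ring
      _ ≤ ∫ z in B, g z ^ lam := by
          apply setIntegral_mono_on
          · exact (integrableOn_const_iff).mpr (Or.inr measure_ball_lt_top)
          · exact hInt.mono_set hBA
          · exact measurableSet_ball
          · intro z hz
            exact Real.rpow_le_rpow (by norm_num) (hB14 z hz) hlam0.le
      _ ≤ ∫ z in A, g z ^ lam := by
          apply setIntegral_mono_set hInt
          · filter_upwards with x
            exact Real.rpow_nonneg (hg0 x) _
          · exact HasSubset.Subset.eventuallyLE hBA
  exact key
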